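/- Let p be a polynomial of degree at most n with |p(z)| ≤ M for all |z| = 1, and let a ∈ ℂ with |a| ≤ 1. Then for all z with |z| ≥ 1, |(1+az)p'(z) − n a p(z)| ≤ M · |(1+az)·n·z^{n−1} − n a z^n|, i.e., |S̃_a[p](z)| ≤ M|S̃_a[E_n](z)| where E_n(z) = z^n. -/

import Mathlib

open Polynomial Metric Set

noncomputable def maxSphere (P : Polynomial ℂ) : ℝ :=
  sSup ((fun w => ‖P.eval w‖) '' sphere (0:ℂ) 1)

noncomputable def minSphere (P : Polynomial ℂ) : ℝ :=
  sInf ((fun w => ‖P.eval w‖) '' sphere (0:ℂ) 1)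

lemma key_re (a w ρ : ℂ) (ha : ‖a‖ ≤ 1) (hw : 1 ≤ ‖w‖)
    (hρ : ‖ρ‖ < 1) (hne : a * w ≠ -1) :
    0 < ((w + (starRingEnd ℂ) a) * ((1 + a * ρ) * (starRingEnd ℂ) (w - ρ))).re := by
  set α := ‖a‖ with hα
  set Z := ‖w‖ with hZ
  set r := ‖ρ‖ with hr
  have hα0 : 0 ≤ α := norm_nonneg a
  have hr0 : 0 ≤ r := norm_nonneg ρ
  have h1 : ((w + (starRingEnd ℂ) a) * ((1 + a * ρ) * (starRingEnd ℂ) (w - ρ))).re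
      = (Z^2 - α^2*r^2) - (1-α^2)*(w * (starRingEnd ℂ) ρ).re
        + (Z^2-1)*(a*ρ).re + (1-r^2)*(a*w).re := by
    rw [hα, hZ, hr]
    simp only [Complex.sq_norm, Complex.normSq_apply, Complex.mul_re, Complex.mul_im,
      Complex.add_re, Complex.add_im, Complex.sub_re, Complex.sub_im, Complex.conj_re,
      Complex.conj_im, Complex.one_re, Complex.one_im]
    ring
  rcases eq_or_lt_of_le (ha.trans hw : α ≤ Z) with heq | hlt
  · -- α = Z = 1
    have hα1 : α = 1 := le_antisymm ha (heq ▸ hw)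
    have hZ1 : Z = 1 := heq ▸ hα1
    have habs : ‖a*w‖ = 1 := by rw [norm_mul, ← hα, ← hZ, hα1, hZ1, mul_one]
    have hrepos : -1 < (a*w).re := by
      rcases lt_or_eq_of_le (neg_le_of_abs_le ((Complex.abs_re_le_norm (a*w)).trans habs.le)) with h | h
      · exact h
      · exfalso
        apply hne
        have him : (a*w).im = 0 := by
          have := Complex.sq_norm (a*w)
          rw [habs, Complex.normSq_apply, ← h] at this
          nlinarith [sq_nonneg (a*w).im]
        apply Complex.ext <;> simp [← h, him]
    rw [h1, hα1, hZ1]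
    have hrr : r^2 < 1 := by nlinarith
    nlinarith
  · -- α < Z
    have hb1 : (w * (starRingEnd ℂ) ρ).re ≤ Z * r := by
      calc (w * (starRingEnd ℂ) ρ).re ≤ ‖w * (starRingEnd ℂ) ρ‖ := Complex.re_le_norm _
      _ = Z * r := by rw [norm_mul, Complex.norm_conj]
    have hb2 : -(α * r) ≤ (a*ρ).re := by
      have := Complex.abs_re_le_norm (a*ρ)
      rw [norm_mul] at this
      cases abs_le.mp this with
      | intro h _ => linarith
    have hb3 : -(α * Z) ≤ (a*w).re := by
      have := Complex.abs_re_le_norm (a*w)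
      rw [norm_mul] at this
      cases abs_le.mp this with
      | intro h _ => linarith
    have hid : (Z^2 - α^2*r^2) - (1-α^2)*(Z*r) + (Z^2-1)*(-(α*r)) + (1-r^2)*(-(α*Z))
        = (Z-α)*(1-α*r)*(Z-r) := by ring
    have hpos : 0 < (Z-α)*(1-α*r)*(Z-r) := by
      apply mul_pos (mul_pos (by linarith) (by nlinarith)) (by linarith)
    have hcoef1 : (0:ℝ) ≤ 1 - α^2 := by nlinarith
    have hcoef2 : (0:ℝ) ≤ Z^2 - 1 := by nlinarith
    have hcoef3 : (0:ℝ) ≤ 1 - r^2 := by nlinarith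
    rw [h1]
    nlinarith [mul_le_mul_of_nonneg_left hb1 hcoef1, mul_le_mul_of_nonneg_left hb2 hcoef2,
      mul_le_mul_of_nonneg_left hb3 hcoef3]


lemma prod_ident (a w : ℂ) (t : Multiset ℂ) (hw : ∀ ρ ∈ t, w ≠ ρ) :
    (1 + a*w) * (derivative (t.map (fun ρ => X - C ρ)).prod).eval w
      - (Multiset.card t : ℂ) * a * ((t.map (fun ρ => X - C ρ)).prod.eval w)
    = ((t.map (fun ρ => X - C ρ)).prod.eval w) * (t.map (fun ρ => (1 + a*ρ)/(w - ρ))).sum := by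
  induction t using Multiset.induction with
  | empty => simp
  | cons ρ t ih =>
    have hwρ : w - ρ ≠ 0 := sub_ne_zero.mpr (hw ρ (Multiset.mem_cons_self _ _))
    have ih' := ih (fun x hx => hw x (Multiset.mem_cons_of_mem hx))
    simp only [Multiset.map_cons, Multiset.prod_cons, Multiset.sum_cons, Multiset.card_cons,
      derivative_mul, eval_add, eval_mul, eval_sub, eval_X, eval_C, derivative_sub,
      derivative_X, derivative_C, sub_zero, eval_one, Nat.cast_add, Nat.cast_one]
    set P := ((t.map (fun ρ => X - C ρ)).prod.eval w)
    set P' := ((derivative (t.map (fun ρ => X - C ρ)).prod).eval w)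
    set S := (t.map (fun ρ => (1 + a*ρ)/(w - ρ))).sum
    set k := (Multiset.card t : ℂ)
    have expand : (1+a*w) * (1 * P + (w-ρ) * P') - (k+1)*a*((w-ρ)*P)
        = (w-ρ) * ((1+a*w)*P' - k*a*P) + ((1+a*w) - a*(w-ρ))*P := by ring
    rw [expand, ih']
    have : (1+a*w) - a*(w-ρ) = 1 + a*ρ := by ring
    rw [this]
    field_simp
    ring

lemma maxmod (R : Polynomial ℂ) (K : ℝ) (h : ∀ w : ℂ, ‖w‖ = 1 → ‖R.eval w‖ ≤ K)
    (u : ℂ) (hu : ‖u‖ ≤ 1) : ‖R.eval u‖ ≤ K := by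
  have hd : DiffContOnCl ℂ (fun z => R.eval z) (ball (0:ℂ) 1) :=
    (R.differentiable).diffContOnCl
  have hb : ∀ z ∈ frontier (ball (0:ℂ) 1), ‖R.eval z‖ ≤ K := by
    intro z hz
    rw [frontier_ball (0:ℂ) one_ne_zero] at hz
    have : ‖z‖ = 1 := by simpa [Complex.dist_eq] using hz
    simpa using h z this
  have hmem : u ∈ closure (ball (0:ℂ) 1) := by
    rw [closure_ball (0:ℂ) one_ne_zero]
    simpa [Complex.dist_eq] using hu
  simpa using
    Complex.norm_le_of_forall_mem_frontier_norm_le isBounded_ball hd hb hmem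

noncomputable def Trev (p : Polynomial ℂ) (m : ℕ) : Polynomial ℂ :=
  ∑ k ∈ Finset.range (m+1), C (p.coeff (m-k)) * X^k

lemma Trev_eval (p : Polynomial ℂ) (m : ℕ) (hp : p.natDegree ≤ m) (u : ℂ) (hu : u ≠ 0) :
    (Trev p m).eval u = u^m * p.eval u⁻¹ := by
  rw [Trev, eval_finset_sum]
  simp only [eval_mul, eval_pow, eval_C, eval_X]
  rw [Polynomial.eval_eq_sum_range' (Nat.lt_succ_of_le hp), Finset.mul_sum]
  rw [← Finset.sum_range_reflect]
  apply Finset.sum_congr rfl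
  intro k hk
  have hk' : k ≤ m := Nat.lt_succ_iff.mp (Finset.mem_range.mp hk)
  have h1 : m + 1 - 1 - k = m - k := by omega
  rw [h1]
  have h2 : m - (m - k) = k := by omega
  rw [h2]
  rw [pow_sub₀ u hu hk']
  ring

lemma Trev_eval_zero (p : Polynomial ℂ) (m : ℕ) : (Trev p m).eval 0 = p.coeff m := by
  rw [Trev, eval_finset_sum]
  rw [Finset.sum_eq_single 0] <;> simp +contextual [Nat.pos_iff_ne_zero]

lemma Trev_bound (p : Polynomial ℂ) (m : ℕ) (K : ℝ) (hp : p.natDegree ≤ m)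
    (h : ∀ w : ℂ, ‖w‖ = 1 → ‖p.eval w‖ ≤ K) :
    ∀ u : ℂ, ‖u‖ ≤ 1 → ‖(Trev p m).eval u‖ ≤ K := by
  intro u hu
  apply maxmod _ _ _ u hu
  intro w hw
  have hw0 : w ≠ 0 := by intro h0; rw [h0] at hw; simp at hw
  rw [Trev_eval p m hp w hw0, norm_mul, norm_pow, hw, one_pow, one_mul]
  apply h
  rw [norm_inv, hw, inv_one]

lemma growth_bound (p : Polynomial ℂ) (m : ℕ) (K : ℝ) (hp : p.natDegree ≤ m)
    (h : ∀ w : ℂ, ‖w‖ = 1 → ‖p.eval w‖ ≤ K) :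
    ∀ z : ℂ, 1 ≤ ‖z‖ → ‖p.eval z‖ ≤ K * (‖z‖)^m := by
  intro z hz
  have hz0 : z ≠ 0 := by
    intro h0; rw [h0] at hz; simp at hz; linarith
  have hu : ‖z⁻¹‖ ≤ 1 := by
    rw [norm_inv]
    exact inv_le_one_of_one_le₀ hz
  have := Trev_bound p m K hp h z⁻¹ hu
  rw [Trev_eval p m hp z⁻¹ (inv_ne_zero hz0), inv_inv, norm_mul, norm_pow, norm_inv] at this
  have hpow : 0 < (‖z‖)^m := pow_pos (by linarith) m
  calc ‖p.eval z‖ = ((‖z‖)⁻¹^m * ‖p.eval z‖) * (‖z‖)^m := by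
        rw [inv_pow, mul_comm _ (‖eval z p‖), mul_assoc, inv_mul_cancel₀ hpow.ne', mul_one]
    _ ≤ K * (‖z‖)^m := by
        apply mul_le_mul_of_nonneg_right this (le_of_lt hpow)

lemma coeff_bound (p : Polynomial ℂ) (m : ℕ) (K : ℝ) (hp : p.natDegree ≤ m)
    (h : ∀ w : ℂ, ‖w‖ = 1 → ‖p.eval w‖ ≤ K) :
    ‖p.coeff m‖ ≤ K := by
  have := Trev_bound p m K hp h 0 (by simp)
  rwa [Trev_eval_zero] at this

lemma circle_bound (n : ℕ) (hn : 1 ≤ n) (p : Polynomial ℂ) (hp : p.natDegree ≤ n)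
    (M M₀ : ℝ) (hM0 : 0 ≤ M) (hMM : M < M₀)
    (hM : ∀ w : ℂ, ‖w‖ = 1 → ‖p.eval w‖ ≤ M)
    (a : ℂ) (ha : ‖a‖ ≤ 1) (w : ℂ) (hw : ‖w‖ = 1) :
    ‖(1 + a*w) * (derivative p).eval w - n*a*(p.eval w)‖ ≤ M₀ * n := by
  by_contra hcon
  push_neg at hcon
  set E := (1 + a*w) * (derivative p).eval w - n*a*(p.eval w) with hE
  have hM₀pos : 0 < M₀ := lt_of_le_of_lt hM0 hMM
  have hnpos : (0:ℝ) < n := by exact_mod_cast hn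
  have hw0 : w ≠ 0 := by intro h0; rw [h0] at hw; simp at hw
  have hwn1 : ‖w^(n-1)‖ = 1 := by rw [norm_pow, hw, one_pow]
  have hden : (M₀:ℂ) * n * w^(n-1) ≠ 0 := by
    apply mul_ne_zero (mul_ne_zero _ _) (pow_ne_zero _ hw0)
    · exact_mod_cast hM₀pos.ne'
    · exact_mod_cast hnpos.ne'
  set lam := E / ((M₀:ℂ) * n * w^(n-1)) with hlam
  have hlamabs : 1 < ‖lam‖ := by
    rw [hlam, norm_div, norm_mul, norm_mul, hwn1, mul_one, Complex.norm_of_nonneg hM₀pos.le,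
      Complex.norm_natCast]
    rw [lt_div_iff₀ (by positivity)]
    simpa [one_mul] using hcon
  have hElam : E = lam * ((M₀:ℂ) * n * w^(n-1)) := by
    rw [hlam, div_mul_cancel₀ _ hden]
  set s := p - C (lam * M₀) * X^n with hs
  -- leading coefficient nonzero
  have hcoeffp : ‖p.coeff n‖ ≤ M := coeff_bound p n M hp hM
  have hlM : M < ‖lam * M₀‖ := by
    rw [norm_mul, Complex.norm_of_nonneg hM₀pos.le]
    nlinarith
  have hsn : s.coeff n ≠ 0 := by
    rw [hs]
    simp only [coeff_sub, coeff_C_mul, coeff_X_pow, if_pos rfl, eq_self_iff_true, if_true, mul_one]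
    intro h0
    have hpn : p.coeff n = lam * (M₀:ℂ) := by linear_combination h0
    rw [hpn] at hcoeffp
    linarith
  have hs0 : s ≠ 0 := fun h0 => hsn (by simp [h0])
  have hsdegle : s.natDegree ≤ n := by
    apply le_trans (natDegree_sub_le _ _)
    simp only [max_le_iff]
    exact ⟨hp, le_trans (natDegree_C_mul_le _ _) (natDegree_X_pow_le n)⟩
  have hsdeg : s.natDegree = n := le_antisymm hsdegle (le_natDegree_of_ne_zero hsn)
  -- roots
  have hsplits : s.Splits := IsAlgClosed.splits s
  have hcard : Multiset.card s.roots = n := by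
    rw [(Polynomial.splits_iff_card_roots).mp hsplits, hsdeg]
  have hfact : s = C s.leadingCoeff * (s.roots.map (fun ρ => X - C ρ)).prod :=
    hsplits.eq_prod_roots
  have hc0 : s.leadingCoeff ≠ 0 := leadingCoeff_ne_zero.mpr hs0
  have hroots_lt : ∀ ρ ∈ s.roots, ‖ρ‖ < 1 := by
    intro ρ hρ
    by_contra hge
    push_neg at hge
    have heval : s.eval ρ = 0 := (Polynomial.mem_roots hs0).mp hρ
    have hpρ : p.eval ρ = lam * M₀ * ρ^n := by
      have : p.eval ρ - lam * M₀ * ρ^n = 0 := by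
        simpa [hs] using heval
      linear_combination this
    have h1 : ‖p.eval ρ‖ ≤ M * (‖ρ‖)^n := growth_bound p n M hp hM ρ hge
    rw [hpρ, norm_mul, norm_pow] at h1
    have hρpos : 0 < (‖ρ‖)^n := pow_pos (by linarith) n
    nlinarith
  have hwroot : ∀ ρ ∈ s.roots, w ≠ ρ := by
    intro ρ hρ h0
    have := hroots_lt ρ hρ
    rw [← h0, hw] at this
    linarith
  -- evaluation of prod nonzero
  set t := s.roots with ht
  set prodP := (t.map (fun ρ => X - C ρ)).prod with hprodP
  have hprodeval : prodP.eval w ≠ 0 := by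
    rw [hprodP, eval_multiset_prod]
    apply Multiset.prod_ne_zero
    intro h0
    rw [Multiset.mem_map] at h0
    obtain ⟨q, hq1, hq2⟩ := h0
    rw [Multiset.mem_map] at hq1
    obtain ⟨ρ, hρ1, hρ2⟩ := hq1
    rw [← hρ2] at hq2
    simp only [eval_sub, eval_X, eval_C] at hq2
    exact (sub_ne_zero.mpr (hwroot ρ hρ1)) hq2
  -- E_s = 0
  have hEs : (1 + a*w) * (derivative s).eval w - n*a*(s.eval w) = 0 := by
    have hds : derivative s = derivative p - C (lam * M₀) * (C (n:ℂ) * X^(n-1)) := by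
      rw [hs, derivative_sub, derivative_C_mul, derivative_X_pow]
    have hwpow : w^n = w^(n-1) * w := by
      rw [← pow_succ]
      congr 1
      omega
    rw [hE] at hElam
    rw [hds, hs]
    simp only [eval_sub, eval_mul, eval_C, eval_pow, eval_X]
    rw [hwpow]
    linear_combination hElam
  -- sum is zero
  have hsum0 : (t.map (fun ρ => (1 + a*ρ)/(w - ρ))).sum = 0 := by
    have hident := prod_ident a w t hwroot
    rw [hcard] at hident
    have hEs2 : s.leadingCoeff * ((1 + a*w) * (derivative prodP).eval w
        - (n:ℂ)*a*(prodP.eval w)) = 0 := by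
      rw [← hEs]
      nth_rewrite 3 [hfact]
      nth_rewrite 2 [hfact]
      rw [derivative_C_mul]
      simp only [eval_mul, eval_C]
      ring
    have := mul_eq_zero.mp hEs2
    rcases this with h | h
    · exact absurd h hc0
    · rw [hident] at h
      rcases mul_eq_zero.mp h with h2 | h2
      · exact absurd h2 hprodeval
      · exact h2
  -- a*w ≠ -1
  have hne : a * w ≠ -1 := by
    intro haw
    have h1aw : 1 + a*w = 0 := by rw [haw]; ring
    rw [h1aw, zero_mul, zero_sub, neg_eq_zero] at hEs
    have hswne : s.eval w ≠ 0 := by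
      rw [hfact]
      simp only [eval_mul, eval_C]
      exact mul_ne_zero hc0 hprodeval
    have han : a ≠ 0 := by
      intro h0; rw [h0, zero_mul] at haw; exact (by norm_num : (0:ℂ) ≠ -1) haw
    have : (n:ℂ) ≠ 0 := by exact_mod_cast hnpos.ne'
    exact hswne (by
      have := mul_eq_zero.mp hEs
      rcases this with h | h
      · rcases mul_eq_zero.mp h with h2 | h2
        · exact absurd h2 this
        · exact absurd h2 han
      · exact h)
  -- positivity contradiction
  have hwge : 1 ≤ ‖w‖ := hw.ge
  have hsumre : 0 < (((w + (starRingEnd ℂ) a)) * (t.map (fun ρ => (1 + a*ρ)/(w - ρ))).sum).re := by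
    rw [← Multiset.sum_map_mul_left]
    have hre : (Multiset.map (fun i => (w + (starRingEnd ℂ) a) * ((1 + a*i)/(w - i))) t).sum.re
        = (Multiset.map (fun ρ => ((w + (starRingEnd ℂ) a) * ((1 + a*ρ)/(w - ρ))).re) t).sum := by
      have := map_multiset_sum Complex.reAddGroupHom (Multiset.map (fun i => (w + (starRingEnd ℂ) a) * ((1 + a*i)/(w - i))) t)
      simpa [Multiset.map_map, Complex.coe_reAddGroupHom] using this
    rw [hre]
    have hpos : ∀ x ∈ Multiset.map (fun ρ => ((w + (starRingEnd ℂ) a) * ((1 + a*ρ)/(w - ρ))).re) t, 0 < x := by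
      intro x hx
      rw [Multiset.mem_map] at hx
      obtain ⟨ρ, hρ, hxeq⟩ := hx
      have hρlt := hroots_lt ρ hρ
      have hwρ : w - ρ ≠ 0 := sub_ne_zero.mpr (hwroot ρ hρ)
      have hkey := key_re a w ρ ha hwge hρlt hne
      have heq : ((w + (starRingEnd ℂ) a) * ((1 + a*ρ)/(w - ρ))).re
          = ((w + (starRingEnd ℂ) a) * ((1 + a * ρ) * (starRingEnd ℂ) (w - ρ))).re
            * ((Complex.normSq (w-ρ))⁻¹) := by
        rw [div_eq_mul_inv, Complex.inv_def]
        have : (w + (starRingEnd ℂ) a) * ((1 + a*ρ) * ((starRingEnd ℂ) (w-ρ) * ((Complex.normSq (w-ρ))⁻¹ : ℝ)))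
            = ((w + (starRingEnd ℂ) a) * ((1 + a * ρ) * (starRingEnd ℂ) (w - ρ))) * (((Complex.normSq (w-ρ))⁻¹ : ℝ) : ℂ) := by
          push_cast
          ring
        rw [this]
        simp [Complex.mul_re]
      rw [← hxeq, heq]
      apply mul_pos hkey
      rw [inv_pos]
      exact Complex.normSq_pos.mpr hwρ
    have htne : t ≠ 0 := by
      rw [← Multiset.card_pos, ht, hcard]
      exact hn
    obtain ⟨ρ0, hρ0⟩ := Multiset.exists_mem_of_ne_zero htne
    have hmem : (fun ρ => ((w + (starRingEnd ℂ) a) * ((1 + a*ρ)/(w - ρ))).re) ρ0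
        ∈ Multiset.map (fun ρ => ((w + (starRingEnd ℂ) a) * ((1 + a*ρ)/(w - ρ))).re) t :=
      Multiset.mem_map_of_mem _ hρ0
    calc (0:ℝ) < _ := hpos _ hmem
    _ ≤ _ := Multiset.single_le_sum (fun x hx => (hpos x hx).le) _ hmem
  rw [hsum0, mul_zero] at hsumre
  simp at hsumre

theorem stmt_10 (n : ℕ) (p : Polynomial ℂ) (hp : p.natDegree ≤ n)
    (M : ℝ) (hM : ∀ w : ℂ, ‖w‖ = 1 → ‖p.eval w‖ ≤ M)
    (a : ℂ) (ha : ‖a‖ ≤ 1) :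
    ∀ z : ℂ, 1 ≤ ‖z‖ →
      ‖(1 + a * z) * (derivative p).eval z - n * a * p.eval z‖ ≤
        M * ‖(1 + a * z) * n * z ^ (n - 1) - n * a * z ^ n‖ := by
  intro z hz
  have hM0 : 0 ≤ M := le_trans (norm_nonneg _) (hM 1 (by simp))
  rcases Nat.eq_zero_or_pos n with hn0 | hn
  · subst hn0
    have hpc : p = C (p.coeff 0) := Polynomial.eq_C_of_natDegree_le_zero hp
    rw [hpc]
    simp
  · -- n ≥ 1
    have hzpos : (0:ℝ) < ‖z‖ := lt_of_lt_of_le one_pos hz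
    have hzn1 : (0:ℝ) < ‖z‖ ^ (n-1) := pow_pos hzpos _
    have hnpos : (0:ℝ) < (n:ℝ) := by exact_mod_cast hn
    have hrhseq : (1 + a * z) * (n:ℂ) * z ^ (n - 1) - (n:ℂ) * a * z ^ n = (n:ℂ) * z^(n-1) := by
      have hzpow : z^n = z^(n-1) * z := by
        rw [← pow_succ]
        congr 1
        omega
      rw [hzpow]
      ring
    rw [hrhseq, norm_mul, Complex.norm_natCast, norm_pow]
    set Q := (1 + C a * X) * derivative p - C ((n:ℂ) * a) * p with hQ
    have hQz : ∀ u : ℂ, Q.eval u = (1 + a*u) * (derivative p).eval u - (n:ℂ)*a*(p.eval u) := by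
      intro u
      simp only [hQ, eval_sub, eval_mul, eval_add, eval_one, eval_C, eval_X]
    -- degree bound for Q
    have hQn : Q.natDegree ≤ n := by
      apply le_trans (natDegree_sub_le _ _)
      simp only [max_le_iff]
      constructor
      · apply le_trans (natDegree_mul_le)
        have h1 : (1 + C a * X).natDegree ≤ 1 := by
          apply le_trans (natDegree_add_le _ _)
          simp only [natDegree_one, max_le_iff]
          exact ⟨Nat.zero_le 1, le_trans (natDegree_C_mul_le _ _) natDegree_X_le⟩
        have h2 : (derivative p).natDegree ≤ n - 1 :=
          le_trans (natDegree_derivative_le p) (Nat.sub_le_sub_right hp 1)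
        omega
      · exact le_trans (natDegree_C_mul_le _ _) hp
    have hcoeffQn : Q.coeff n = 0 := by
      have hexp : (1 + C a * X) * derivative p = derivative p + C a * (X * derivative p) := by
        ring
      have h1 : (derivative p).coeff n = 0 := by
        rw [coeff_derivative]
        rw [coeff_eq_zero_of_natDegree_lt (lt_of_le_of_lt hp (lt_add_one n)), zero_mul]
      have h2 : (X * derivative p).coeff n = p.coeff n * (n:ℂ) := by
        conv_lhs => rw [show n = (n-1)+1 by omega]
        rw [coeff_X_mul, coeff_derivative]
        congr 1
        · congr 1
          omega
        · rw [Nat.cast_sub hn]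
          push_cast
          ring
      rw [hQ, coeff_sub, hexp, coeff_add, coeff_C_mul, coeff_C_mul, h1, h2]
      ring
    have hQdeg : Q.natDegree ≤ n - 1 := by
      rw [natDegree_le_iff_coeff_eq_zero]
      intro N hN
      rcases eq_or_lt_of_le (show n ≤ N by omega) with h | h
      · rw [← h]
        exact hcoeffQn
      · exact coeff_eq_zero_of_natDegree_lt (lt_of_le_of_lt hQn h)
    rw [show (1 + a * z) * (derivative p).eval z - (n:ℂ) * a * p.eval z = Q.eval z from (hQz z).symm]
    have main : ∀ ε : ℝ, 0 < ε → ‖Q.eval z‖ ≤ (M + ε) * ((n:ℝ) * (‖z‖)^(n-1)) := by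
      intro ε hε
      have hcb : ∀ w : ℂ, ‖w‖ = 1 → ‖Q.eval w‖ ≤ (M + ε) * n := by
        intro w hw
        rw [hQz w]
        exact circle_bound n hn p hp M (M+ε) hM0 (by linarith) hM a ha w hw
      have hg := growth_bound Q (n-1) ((M+ε)*n) hQdeg hcb z hz
      calc ‖Q.eval z‖ ≤ ((M+ε) * n) * (‖z‖)^(n-1) := hg
        _ = (M + ε) * ((n:ℝ) * (‖z‖)^(n-1)) := by ring
    by_contra hcc
    push_neg at hcc
    set c := (n:ℝ) * (‖z‖)^(n-1) with hc
    have hcpos : 0 < c := mul_pos hnpos hzn1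
    have hε : 0 < (‖Q.eval z‖ - M * c) / (2*c) := by
      apply div_pos _ (by linarith)
      linarith
    have := main _ hε
    rw [show (M + (‖Q.eval z‖ - M * c) / (2*c)) * c
        = M * c + (‖Q.eval z‖ - M * c) / 2 from by field_simp] at this
    linarith
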